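/- For any polynomial p ∈ 𝔽_q[x], the set {λ ∈ 𝔽_q[x] : (x^n − 1) divides λ·p} equals the set of polynomial multiples of ∏_{γ ∈ 𝔽_q ∖ {0}, p(γ) ≠ 0} (x − γ); that is, (x^n − 1) divides λ·p if and only if ∏_{γ ∈ 𝔽_q ∖ {0}, p(γ) ≠ 0} (x − γ) divides λ. -/

import Mathlib

open Polynomial

private lemma pairwise_aux {F : Type*} [Field F] (s : Finset F) :
    (s : Set F).Pairwise (Function.onFun IsCoprime fun γ : F => X - C γ) :=
  fun _ _ _ _ hne => (Polynomial.pairwise_coprime_X_sub_C Function.injective_id) hne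

private lemma key_eq {F : Type*} [Field F] [Fintype F] [DecidableEq F] :
    (X : Polynomial F) ^ (Fintype.card F - 1) - 1 =
      ∏ γ ∈ Finset.univ.filter (fun γ : F => γ ≠ 0), (X - C γ) := by
  have hcard : (Finset.univ.filter (fun γ : F => γ ≠ 0)).card = Fintype.card F - 1 := by
    rw [Finset.filter_ne' Finset.univ (0 : F), Finset.card_erase_of_mem (Finset.mem_univ _),
      Finset.card_univ]
  have hmono : ((X : Polynomial F) ^ (Fintype.card F - 1) - 1).Monic := by
    apply Polynomial.monic_X_pow_sub_C (1 : F)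
    have : 2 ≤ Fintype.card F := Fintype.one_lt_card
    omega
  have hmonp : (∏ γ ∈ Finset.univ.filter (fun γ : F => γ ≠ 0), (X - C γ)).Monic :=
    Polynomial.monic_prod_of_monic _ _ fun γ _ => monic_X_sub_C γ
  have hdvd : (∏ γ ∈ Finset.univ.filter (fun γ : F => γ ≠ 0), (X - C γ)) ∣
      (X : Polynomial F) ^ (Fintype.card F - 1) - 1 := by
    apply Finset.prod_dvd_of_coprime (pairwise_aux _)
    intro γ hγ
    rw [Finset.mem_filter] at hγ
    rw [Polynomial.dvd_iff_isRoot, Polynomial.IsRoot.def]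
    simp [FiniteField.pow_card_sub_one_eq_one γ hγ.2]
  apply Polynomial.eq_of_monic_of_dvd_of_natDegree_le hmonp hmono hdvd
  rw [Polynomial.natDegree_prod _ _ (fun γ _ => X_sub_C_ne_zero γ)]
  simp only [natDegree_X_sub_C, Finset.sum_const, smul_eq_mul, mul_one, hcard]
  have h1 : ((1 : Polynomial F)).natDegree < ((X : Polynomial F) ^ (Fintype.card F - 1)).natDegree := by
    have : 2 ≤ Fintype.card F := Fintype.one_lt_card
    simp only [natDegree_one, natDegree_pow, natDegree_X, mul_one]
    omega
  rw [Polynomial.natDegree_sub_eq_left_of_natDegree_lt h1, natDegree_pow, natDegree_X, mul_one]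

/-- `(x^n - 1) ∣ λ·p` iff `∏_{γ ≠ 0, p(γ) ≠ 0} (x - γ)` divides `λ`. -/
theorem stmt_9 {F : Type*} [Field F] [Fintype F] [DecidableEq F]
    (n : ℕ) (hn : n = Fintype.card F - 1)
    (p lam : Polynomial F) :
    (Polynomial.X ^ n - 1) ∣ lam * p ↔
      (∏ γ ∈ Finset.univ.filter (fun γ : F => γ ≠ 0 ∧ p.eval γ ≠ 0),
        (Polynomial.X - Polynomial.C γ)) ∣ lam := by
  subst hn
  rw [key_eq]
  have hsplit : Finset.univ.filter (fun γ : F => γ ≠ 0) =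
      (Finset.univ.filter (fun γ : F => γ ≠ 0 ∧ p.eval γ ≠ 0)) ∪
      (Finset.univ.filter (fun γ : F => γ ≠ 0 ∧ p.eval γ = 0)) := by
    ext γ; simp [Finset.mem_filter]; tauto
  have hdisj : Disjoint (Finset.univ.filter (fun γ : F => γ ≠ 0 ∧ p.eval γ ≠ 0))
      (Finset.univ.filter (fun γ : F => γ ≠ 0 ∧ p.eval γ = 0)) := by
    rw [Finset.disjoint_left]
    intro γ h1 h2
    rw [Finset.mem_filter] at h1 h2
    exact h1.2.2 h2.2.2
  rw [hsplit, Finset.prod_union hdisj]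
  constructor
  · intro h
    apply Finset.prod_dvd_of_coprime (pairwise_aux _)
    intro γ hγ
    rw [Finset.mem_filter] at hγ
    have hd : (X - C γ) ∣ lam * p := by
      refine dvd_trans ?_ h
      exact dvd_mul_of_dvd_left (Finset.dvd_prod_of_mem (fun γ : F => X - C γ) (Finset.mem_filter.mpr ⟨Finset.mem_univ _, hγ.2⟩)) _
    rcases (prime_X_sub_C γ).dvd_mul.mp hd with h' | h'
    · exact h'
    · exact absurd ((Polynomial.dvd_iff_isRoot).mp h') hγ.2.2
  · intro h
    have hp : (∏ γ ∈ Finset.univ.filter (fun γ : F => γ ≠ 0 ∧ p.eval γ = 0),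
        (X - C γ)) ∣ p := by
      apply Finset.prod_dvd_of_coprime (pairwise_aux _)
      intro γ hγ
      rw [Finset.mem_filter] at hγ
      exact Polynomial.dvd_iff_isRoot.mpr hγ.2.2
    exact mul_dvd_mul h hp
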